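/- Let r ∈ ℚ with r > 1. Then for every k ∈ ℕ₀, the element d(r)·r^k − 1 belongs to S_r; that is, 1 divides d(r)·r^k in S_r. -/
import Mathlib


open Finsupp
open scoped ENNReal

/-- The Puiseux monoid (rational cyclic semiring) `S_r`, the additive submonoid of `ℚ`
generated by the nonnegative powers of `r`. -/
def S (r : ℚ) : AddSubmonoid ℚ := AddSubmonoid.closure {x : ℚ | ∃ n : ℕ, x = r ^ n}

/-- A factorization of `x` over the powers of `r`: a finitely supported choice of
coefficients `α i` with `∑ α i * r ^ i = x`. -/
def IsFactorization (r x : ℚ) (α : ℕ →₀ ℕ) : Prop :=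
  (α.sum fun i c => (c : ℚ) * r ^ i) = x

/-- The length of a factorization. -/
def flen (α : ℕ →₀ ℕ) : ℕ := α.sum fun _ c => c

/-- The set of lengths of factorizations of `x` over the powers of `r`. -/
def lengthSet (r x : ℚ) : Set ℕ :=
  {t | ∃ α : ℕ →₀ ℕ, IsFactorization r x α ∧ flen α = t}

/-- An atom of `S_r`: a nonzero element that is not the sum of two nonzero elements. -/
def IsAtomS (r a : ℚ) : Prop :=
  a ∈ S r ∧ a ≠ 0 ∧ ¬ ∃ y z : ℚ, y ∈ S r ∧ z ∈ S r ∧ y ≠ 0 ∧ z ≠ 0 ∧ a = y + z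

/-- The set of lengths of `x` as sums of atoms of `S_r`. -/
def atomLengthSet (r x : ℚ) : Set ℕ :=
  {t | ∃ f : Fin t → ℚ, (∀ i, IsAtomS r (f i)) ∧ ∑ i, f i = x}

lemma pow_mem_S (r : ℚ) (n : ℕ) : r ^ n ∈ S r :=
  AddSubmonoid.subset_closure ⟨n, rfl⟩

lemma nsmul_pow_mem_S (r : ℚ) (m n : ℕ) : (m : ℚ) * r ^ n ∈ S r := by
  induction m with
  | zero => simpa using (S r).zero_mem
  | succ m ih =>
    have h := (S r).add_mem ih (pow_mem_S r n)
    push_cast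
    convert h using 1
    ring

theorem stmt17 (r : ℚ) (h1 : 1 < r) (k : ℕ) :
    (r.den : ℚ) * r ^ k - 1 ∈ S r := by
  have hden : (r.den : ℚ) * r = (r.num : ℚ) := by
    rw [mul_comm, Rat.mul_den_eq_num]
  have hnumpos : 0 < r.num := Rat.num_pos.mpr (lt_trans one_pos h1)
  have hlt : (r.den : ℤ) < r.num := by
    have : (r.den : ℚ) * 1 < (r.den : ℚ) * r :=
      mul_lt_mul_of_pos_left h1 (by exact_mod_cast r.pos)
    rw [mul_one, hden] at this
    exact_mod_cast this
  induction k with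
  | zero =>
    have : ((r.den - 1 : ℕ) : ℚ) * r ^ 0 ∈ S r := nsmul_pow_mem_S r _ 0
    have hd : 1 ≤ r.den := r.pos
    convert this using 1
    push_cast [hd]
    ring
  | succ k ih =>
    have key : (r.den : ℚ) * r ^ (k + 1) - 1
        = ((r.num - r.den).toNat : ℚ) * r ^ k + ((r.den : ℚ) * r ^ k - 1) := by
      have h2 : ((r.num - r.den).toNat : ℚ) = (r.num : ℚ) - r.den := by
        have : ((r.num - r.den).toNat : ℤ) = r.num - r.den :=
          Int.toNat_of_nonneg (by omega)
        exact_mod_cast this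
      rw [h2, pow_succ]
      rw [show (r.den : ℚ) * (r ^ k * r) = ((r.den : ℚ) * r) * r ^ k by ring, hden]
      ring
    rw [key]
    exact (S r).add_mem (nsmul_pow_mem_S r _ k) ih
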